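/- arXiv:2003.00589 — 5 statements merged into one kernel-verified Lean document; each statement's English description precedes it below -/
import Mathlib

section
/- If M > L > k ≥ 2 are integers such that M ≥ L²/3, then binom(M, k) ≥ binom(L, k+1). -/
lemma desc_key (M L : ℕ) (hLM : L ≤ M) : ∀ k, k ≤ L →
    L.descFactorial k * M ^ k ≤ M.descFactorial k * L ^ k := by
  intro k
  induction k with
  | zero => simp
  | succ k ih =>
    intro hkL
    have hk : k ≤ L := Nat.le_of_succ_le hkL
    have h1 : L.descFactorial k * M ^ k ≤ M.descFactorial k * L ^ k := ih hk
    have h2 : (L - k) * M ≤ (M - k) * L := by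
      have hkM : k ≤ M := hk.trans hLM
      zify [hk, hkM]
      nlinarith [hLM, hk]
    rw [Nat.descFactorial_succ, Nat.descFactorial_succ, pow_succ, pow_succ]
    calc (L - k) * L.descFactorial k * (M ^ k * M)
        = ((L - k) * M) * (L.descFactorial k * M ^ k) := by ring
      _ ≤ ((M - k) * L) * (M.descFactorial k * L ^ k) :=
          Nat.mul_le_mul h2 h1
      _ = (M - k) * M.descFactorial k * (L ^ k * L) := by ring

theorem choose_ge_choose_of_sq_div_three (M L k : ℕ) (hk : 2 ≤ k) (hLk : k < L)
    (hML : L < M) (h : ((L : ℝ) ^ 2) / 3 ≤ (M : ℝ)) :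
    L.choose (k + 1) ≤ M.choose k := by
  -- convert hypothesis to ℕ
  have h3M : L ^ 2 ≤ 3 * M := by
    have : (L : ℝ) ^ 2 ≤ 3 * M := by linarith
    exact_mod_cast this
  have hLpos : 0 < L := lt_of_le_of_lt (by omega) hLk
  have hMpos : 0 < M := hLpos.trans hML
  -- key power inequality: (k+1) * M^k ≥ (L-k) * L^k
  have hpow : (L - k) * L ^ k ≤ (k + 1) * M ^ k := by
    have e1 : (k + 1) ^ k * L ≤ (k + 1) * L ^ k := by
      obtain ⟨j, rfl⟩ : ∃ j, k = j + 1 := ⟨k - 1, by omega⟩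
      have hj : (j + 1 + 1) ^ j ≤ L ^ j := Nat.pow_le_pow_left (by omega) _
      calc (j + 1 + 1) ^ (j + 1) * L = (j + 1 + 1) * ((j + 1 + 1) ^ j * L) := by
            rw [pow_succ]; ring
        _ ≤ (j + 1 + 1) * (L ^ j * L) :=
            Nat.mul_le_mul_left _ (Nat.mul_le_mul_right _ hj)
        _ = (j + 1 + 1) * L ^ (j + 1) := by rw [pow_succ]
    have e2 : 3 ^ k * L ≤ (k + 1) ^ k * L :=
      Nat.mul_le_mul_right _ (Nat.pow_le_pow_left (by omega) _)
    have e3 : 3 ^ k * (L - k) ≤ 3 ^ k * L := Nat.mul_le_mul_left _ (Nat.sub_le _ _)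
    -- combine: 3^k * ((L-k) * L^k) ≤ (k+1) * L^k * L^k ≤ (k+1) * (3M)^k = 3^k * ((k+1) * M^k)
    have e4 : (k + 1) * (L ^ k * L ^ k) ≤ (k + 1) * (3 * M) ^ k := by
      apply Nat.mul_le_mul_left
      calc L ^ k * L ^ k = (L ^ 2) ^ k := by ring
        _ ≤ (3 * M) ^ k := Nat.pow_le_pow_left h3M _
    have main : 3 ^ k * ((L - k) * L ^ k) ≤ 3 ^ k * ((k + 1) * M ^ k) := by
      calc 3 ^ k * ((L - k) * L ^ k) = (3 ^ k * (L - k)) * L ^ k := by ring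
        _ ≤ ((k + 1) ^ k * L) * L ^ k := Nat.mul_le_mul_right _ (e3.trans e2)
        _ ≤ ((k + 1) * L ^ k) * L ^ k := Nat.mul_le_mul_right _ e1
        _ = (k + 1) * (L ^ k * L ^ k) := by ring
        _ ≤ (k + 1) * (3 * M) ^ k := e4
        _ = 3 ^ k * ((k + 1) * M ^ k) := by rw [mul_pow]; ring
    exact Nat.le_of_mul_le_mul_left main (Nat.pow_pos (by norm_num))
  -- descending factorial inequality
  have hdesc : L.descFactorial k * M ^ k ≤ M.descFactorial k * L ^ k :=
    desc_key M L hML.le k hLk.le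
  -- combine: (L-k) * L.descFactorial k ≤ (k+1) * M.descFactorial k
  have hcomb : (L - k) * L.descFactorial k ≤ (k + 1) * M.descFactorial k := by
    have hmul : ((L - k) * L.descFactorial k) * (L ^ k * M ^ k) ≤
        ((k + 1) * M.descFactorial k) * (L ^ k * M ^ k) := by
      calc ((L - k) * L.descFactorial k) * (L ^ k * M ^ k)
          = ((L - k) * L ^ k) * (L.descFactorial k * M ^ k) := by ring
        _ ≤ ((k + 1) * M ^ k) * (M.descFactorial k * L ^ k) :=
            Nat.mul_le_mul hpow hdesc
        _ = ((k + 1) * M.descFactorial k) * (L ^ k * M ^ k) := by ring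
    exact Nat.le_of_mul_le_mul_right hmul
      (Nat.mul_pos (Nat.pow_pos hLpos) (Nat.pow_pos hMpos))
  -- translate to choose via factorials
  have key : (k + 1).factorial * L.choose (k + 1) ≤ (k + 1).factorial * M.choose k := by
    rw [← Nat.descFactorial_eq_factorial_mul_choose]
    have : (k + 1).factorial * M.choose k = (k + 1) * (k.factorial * M.choose k) := by
      rw [Nat.factorial_succ]; ring
    rw [this, ← Nat.descFactorial_eq_factorial_mul_choose,
      Nat.descFactorial_succ]
    exact hcomb
  exact Nat.le_of_mul_le_mul_left key (Nat.factorial_pos _)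
end

section
/- Define ℓ_n recursively by ℓ_0 = 3 and ℓ_{n+1} = 1 + Σ_{j=0}^{n} (-1)^j * binom(ℓ_{n-j}, j+2). Then for all n ≥ 0, ℓ_n²/3 ≤ ℓ_{n+1} ≤ ℓ_n²/2. -/
lemma two_mul_choose_two (m : ℕ) : 2 * m.choose 2 = m * (m - 1) := by
  have h := Nat.descFactorial_eq_factorial_mul_choose m 2
  simp [Nat.descFactorial, Nat.factorial] at h
  rw [← h]; ring

lemma six_mul_choose_three (m : ℕ) : 6 * m.choose 3 = m * (m - 1) * (m - 2) := by
  have h := Nat.descFactorial_eq_factorial_mul_choose m 3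
  simp [Nat.descFactorial, Nat.factorial] at h
  rw [← h]; ring

lemma alt_nonneg : ∀ (n : ℕ) (f : ℕ → ℤ), (∀ i, f (i+1) ≤ f i) → (∀ i, 0 ≤ f i) →
    0 ≤ ∑ j ∈ Finset.range n, (-1:ℤ)^j * f j
  | 0, f, _, _ => by simp
  | 1, f, _, hnn => by simpa using hnn 0
  | (n+2), f, hmono, hnn => by
    have ih := alt_nonneg n (fun j => f (j+2)) (fun i => hmono _) (fun i => hnn _)
    rw [show n+2 = n+1+1 from rfl, Finset.sum_range_succ', Finset.sum_range_succ']
    have he : ∑ j ∈ Finset.range n, (-1:ℤ)^(j+1+1) * f (j+1+1) =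
        ∑ j ∈ Finset.range n, (-1:ℤ)^j * f (j+2) := by
      refine Finset.sum_congr rfl fun j _ => ?_
      ring
    rw [he]
    have h01 := hmono 0
    have h1 := hnn 1
    simp only [pow_one, pow_zero, one_mul, neg_one_mul, zero_add] at *
    linarith

lemma alt_le_head (n : ℕ) (f : ℕ → ℤ) (hmono : ∀ i, f (i+1) ≤ f i) (hnn : ∀ i, 0 ≤ f i) :
    ∑ j ∈ Finset.range (n+1), (-1:ℤ)^j * f j ≤ f 0 := by
  rw [Finset.sum_range_succ']
  have he : ∑ j ∈ Finset.range n, (-1:ℤ)^(j+1) * f (j+1) =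
      - ∑ j ∈ Finset.range n, (-1:ℤ)^j * f (j+1) := by
    rw [← Finset.sum_neg_distrib]
    exact Finset.sum_congr rfl fun j _ => by ring
  have h := alt_nonneg n (fun j => f (j+1)) (fun i => hmono _) (fun i => hnn _)
  simp only [pow_zero, one_mul] at *
  linarith

lemma alt_ge (n : ℕ) (f : ℕ → ℤ) (hmono : ∀ i, f (i+1) ≤ f i) (hnn : ∀ i, 0 ≤ f i) :
    f 0 - f 1 ≤ ∑ j ∈ Finset.range (n+1), (-1:ℤ)^j * f j := by
  rw [Finset.sum_range_succ']
  have he : ∑ j ∈ Finset.range n, (-1:ℤ)^(j+1) * f (j+1) =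
      - ∑ j ∈ Finset.range n, (-1:ℤ)^j * f (j+1) := by
    rw [← Finset.sum_neg_distrib]
    exact Finset.sum_congr rfl fun j _ => by ring
  have h : ∑ j ∈ Finset.range n, (-1:ℤ)^j * f (j+1) ≤ f 1 := by
    rcases n with _ | m
    · simpa using hnn 1
    · exact alt_le_head m (fun j => f (j+1)) (fun i => hmono _) (fun i => hnn _)
  simp only [pow_zero, one_mul] at *
  linarith

lemma exc_step (a b k m : ℕ) (h : m ≤ a) (h2 : b.choose (k+1) ≤ m.choose k) :
    b.choose (k+1) ≤ a.choose k := le_trans h2 (Nat.choose_le_choose k h)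

lemma choose_step_main (a b k : ℕ) (hb3 : 3 ≤ b) (hba : b ≤ a) (h3a : b*b ≤ 3*a)
    (hkb : k + 1 ≤ b) (hk2 : 2 ≤ k) (h6 : 6^k ≤ (k+1) * b^(k-1)) :
    b.choose (k+1) ≤ a.choose k := by
  have hka : k ≤ a := le_trans (le_trans (Nat.le_succ k) hkb) hba
  set x := a + 1 - k with hx
  have hbx : b * b ≤ 6 * x := by
    rcases le_or_gt 6 b with h6b | h6b
    · have : 6 * b ≤ b * b := Nat.mul_le_mul_right b h6b
      omega
    · interval_cases b <;> omega
  have hpow : b ^ (k+1) ≤ (k+1) * x ^ k := by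
    have h1 : (b*b)^k ≤ (6*x)^k := Nat.pow_le_pow_left hbx k
    have h2 : (b*b)^k = b^(k+1) * b^(k-1) := by
      rw [← pow_two, ← pow_mul, ← pow_add]
      congr 1
      omega
    have h3 : (6*x)^k = 6^k * x^k := mul_pow 6 x k
    have h4 : b^(k+1) * 6^k ≤ b^(k+1) * ((k+1) * b^(k-1)) := Nat.mul_le_mul_left _ h6
    have h5 : b^(k+1) * ((k+1) * b^(k-1)) = (k+1) * (b^(k+1) * b^(k-1)) := by ring
    have h7 : (k+1) * (b^(k+1) * b^(k-1)) ≤ (k+1) * (6^k * x^k) := by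
      rw [← h2]
      exact Nat.mul_le_mul_left _ (by rw [← h3]; exact h1)
    have h8 : b^(k+1) * 6^k ≤ ((k+1) * x^k) * 6^k := by
      calc b^(k+1) * 6^k ≤ (k+1) * (6^k * x^k) := le_trans h4 (le_trans (le_of_eq h5) h7)
        _ = ((k+1) * x^k) * 6^k := by ring
    exact Nat.le_of_mul_le_mul_right h8 (Nat.pow_pos (by norm_num))
  have c1 : Nat.factorial (k+1) * b.choose (k+1) ≤ b^(k+1) := by
    rw [← Nat.descFactorial_eq_factorial_mul_choose]
    exact Nat.descFactorial_le_pow b (k+1)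
  have c2 : x ^ k ≤ Nat.factorial k * a.choose k := by
    rw [← Nat.descFactorial_eq_factorial_mul_choose]
    exact Nat.pow_sub_le_descFactorial a k
  have c3 : Nat.factorial (k+1) * b.choose (k+1) ≤ Nat.factorial (k+1) * a.choose k := by
    calc Nat.factorial (k+1) * b.choose (k+1) ≤ b^(k+1) := c1
      _ ≤ (k+1) * x^k := hpow
      _ ≤ (k+1) * (Nat.factorial k * a.choose k) := Nat.mul_le_mul_left _ c2
      _ = Nat.factorial (k+1) * a.choose k := by rw [Nat.factorial_succ]; ring
  exact Nat.le_of_mul_le_mul_left c3 (Nat.factorial_pos _)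

lemma choose_step (a b k : ℕ) (hb3 : 3 ≤ b) (hba : b ≤ a) (h3a : b*b ≤ 3*a) (hk2 : 2 ≤ k) :
    b.choose (k+1) ≤ a.choose k := by
  rcases lt_or_ge b (k+1) with h | hkb
  · rw [Nat.choose_eq_zero_of_lt h]; exact Nat.zero_le _
  · rcases le_or_gt 5 k with hk5 | hk5
    · refine choose_step_main a b k hb3 hba h3a hkb hk2 ?_
      have hb6 : 6 ≤ b := le_trans (by omega) hkb
      calc 6^k = 6 * 6^(k-1) := by rw [← pow_succ']; congr 1; omega
        _ ≤ (k+1) * b^(k-1) := Nat.mul_le_mul (by omega) (Nat.pow_le_pow_left hb6 _)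
    · interval_cases k
      · rcases le_or_gt 12 b with hb | hb
        · refine choose_step_main a b 2 hb3 hba h3a hkb (by norm_num) ?_
          have h := Nat.pow_le_pow_left hb 1
          norm_num at h ⊢
          omega
        · interval_cases b <;>
            first
            | exact exc_step a _ _ 3 (by omega) (by decide)
            | exact exc_step a _ _ 6 (by omega) (by decide)
            | exact exc_step a _ _ 9 (by omega) (by decide)
            | exact exc_step a _ _ 12 (by omega) (by decide)
            | exact exc_step a _ _ 17 (by omega) (by decide)
            | exact exc_step a _ _ 22 (by omega) (by decide)
            | exact exc_step a _ _ 27 (by omega) (by decide)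
            | exact exc_step a _ _ 34 (by omega) (by decide)
            | exact exc_step a _ _ 41 (by omega) (by decide)
      · rcases le_or_gt 8 b with hb | hb
        · refine choose_step_main a b 3 hb3 hba h3a hkb (by norm_num) ?_
          have h := Nat.pow_le_pow_left hb 2
          norm_num at h ⊢
          omega
        · interval_cases b <;>
            first
            | exact exc_step a _ _ 6 (by omega) (by decide)
            | exact exc_step a _ _ 9 (by omega) (by decide)
            | exact exc_step a _ _ 12 (by omega) (by decide)
            | exact exc_step a _ _ 17 (by omega) (by decide)
      · rcases le_or_gt 7 b with hb | hb
        · refine choose_step_main a b 4 hb3 hba h3a hkb (by norm_num) ?_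
          have h := Nat.pow_le_pow_left hb 3
          norm_num at h ⊢
          omega
        · interval_cases b <;>
            first
            | exact exc_step a _ _ 9 (by omega) (by decide)
            | exact exc_step a _ _ 12 (by omega) (by decide)

theorem ell_growth (ℓ : ℕ → ℤ) (h0 : ℓ 0 = 3)
    (hrec : ∀ n : ℕ, ℓ (n + 1) =
      1 + ∑ j ∈ Finset.range (n + 1), (-1) ^ j * ((ℓ (n - j)).toNat.choose (j + 2) : ℤ)) (n : ℕ) :
    ((ℓ n : ℚ) ^ 2) / 3 ≤ (ℓ (n + 1) : ℚ) ∧ (ℓ (n + 1) : ℚ) ≤ ((ℓ n : ℚ) ^ 2) / 2 := by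
  have h1 : ℓ 1 = 4 := by
    have := hrec 0
    norm_num [Finset.sum_range_succ, h0] at this
    exact this
  have h2 : ℓ 2 = 6 := by
    have := hrec 1
    norm_num [Finset.sum_range_succ, h0, h1] at this
    exact this
  have h3 : ℓ 3 = 12 := by
    have := hrec 2
    norm_num [Finset.sum_range_succ, h0, h1, h2] at this
    exact this
  have h4 : ℓ 4 = 48 := by
    have := hrec 3
    norm_num [Finset.sum_range_succ, h0, h1, h2, h3] at this
    exact this
  have main : ∀ N : ℕ, 3 ≤ ℓ N ∧ ℓ N ≤ ℓ (N+1) ∧ ℓ N ^ 2 ≤ 3 * ℓ (N+1) ∧ 2 * ℓ (N+1) ≤ ℓ N ^ 2 := by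
    intro N
    induction N using Nat.strong_induction_on with
    | _ N ih =>
      match N, ih with
      | 0, _ => refine ⟨by rw [h0], by rw [h0, h1]; norm_num, ?_, ?_⟩ <;> rw [h0, h1] <;> norm_num
      | 1, _ => refine ⟨by rw [h1]; norm_num, by rw [h1, h2]; norm_num, ?_, ?_⟩ <;> rw [h1, h2] <;> norm_num
      | 2, _ => refine ⟨by rw [h2]; norm_num, by rw [h2, h3]; norm_num, ?_, ?_⟩ <;> rw [h2, h3] <;> norm_num
      | 3, _ => refine ⟨by rw [h3]; norm_num, by rw [h3, h4]; norm_num, ?_, ?_⟩ <;> rw [h3, h4] <;> norm_num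
      | (m+4), ih => ?_
      set N := m + 4 with hN
      -- basic facts from strong induction hypothesis
      have q3 := ih (m+3) (by omega)
      have h3N : 3 ≤ ℓ N := le_trans q3.1 q3.2.1
      have hle : ∀ j, j < N → ℓ j ≤ ℓ (j+1) := fun j hj => (ih j hj).2.1
      have hmonochain : ∀ i j : ℕ, i ≤ j → j ≤ N → ℓ i ≤ ℓ j := by
        intro i j hij hjN
        induction j, hij using Nat.le_induction with
        | base => exact le_refl _
        | succ j hij ihj => exact le_trans (ihj (by omega)) (hle j (by omega))
      have h12 : 12 ≤ ℓ (m+3) := by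
        rw [← h3]; exact hmonochain 3 (m+3) (by omega) (by omega)
      -- the alternating term function
      set f : ℕ → ℤ := fun i => (((ℓ (N - i)).toNat.choose (i+2) : ℕ) : ℤ) with hf
      have hnn : ∀ i, 0 ≤ f i := fun i => Int.natCast_nonneg _
      have hmono : ∀ i, f (i+1) ≤ f i := by
        intro i
        have : (ℓ (N - (i+1))).toNat.choose (i+1+2) ≤ (ℓ (N - i)).toNat.choose (i+2) := by
          have hstep : (ℓ (N - (i+1))).toNat.choose ((i+2)+1) ≤ (ℓ (N - i)).toNat.choose (i+2) := by
            rcases lt_or_ge i N with hiN | hiN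
            · have hji : N - (i+1) + 1 = N - i := by omega
              have qj := ih (N - (i+1)) (by omega)
              set b := (ℓ (N - (i+1))).toNat with hb
              set a := (ℓ (N - i)).toNat with ha
              have hbz : (b:ℤ) = ℓ (N - (i+1)) := Int.toNat_of_nonneg (le_trans (by norm_num) qj.1)
              have haz : (a:ℤ) = ℓ (N - i) := by
                rw [ha, ← hji]
                exact Int.toNat_of_nonneg (le_trans (le_trans (by norm_num) qj.1) qj.2.1)
              refine choose_step a b (i+2) ?_ ?_ ?_ (by omega)
              · have := qj.1; omega
              · have := qj.2.1; rw [hji] at this; omega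
              · have hsq := qj.2.2.1
                rw [hji] at hsq
                have : (b:ℤ) * b ≤ 3 * a := by rw [hbz, haz]; nlinarith [hsq]
                exact_mod_cast this
            · have e1 : N - (i+1) = 0 := by omega
              have e2 : N - i = 0 := by omega
              rw [e1, e2, h0]
              refine choose_step _ _ (i+2) (by norm_num) (le_refl _) (by norm_num) (by omega)
          exact hstep
        simp only [hf]
        exact_mod_cast this
      have hsum := hrec N
      have hub := alt_le_head N f hmono hnn
      have hlb := alt_ge N f hmono hnn
      have hrw : ∑ j ∈ Finset.range (N + 1), (-1:ℤ) ^ j * ((ℓ (N - j)).toNat.choose (j + 2) : ℤ)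
          = ∑ j ∈ Finset.range (N+1), (-1:ℤ)^j * f j := rfl
      rw [hrw] at hsum
      -- identify f 0 and f 1
      set A := (ℓ N).toNat with hA
      set B := (ℓ (m+3)).toNat with hB
      have hAz : (A:ℤ) = ℓ N := Int.toNat_of_nonneg (by omega)
      have hBz : (B:ℤ) = ℓ (m+3) := Int.toNat_of_nonneg (by omega)
      have hf0 : f 0 = (A.choose 2 : ℤ) := by simp [hf, hA]
      have hf1 : f 1 = (B.choose 3 : ℤ) := by
        have : N - 1 = m + 3 := by omega
        simp [hf, this, hB]
      have hc2 : 2 * (A.choose 2 : ℤ) = (A:ℤ) * ((A:ℤ) - 1) := by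
        have hA2 : 2 ≤ A := by omega
        have := two_mul_choose_two A
        have : ((2 * A.choose 2 : ℕ) : ℤ) = ((A * (A-1) : ℕ) : ℤ) := by rw [this]
        push_cast [Nat.cast_sub (by omega : 1 ≤ A)] at this
        linarith [this]
      have hc3 : 6 * (B.choose 3 : ℤ) = (B:ℤ) * ((B:ℤ) - 1) * ((B:ℤ) - 2) := by
        have hB2 : 2 ≤ B := by omega
        have := six_mul_choose_three B
        have : ((6 * B.choose 3 : ℕ) : ℤ) = ((B * (B-1) * (B-2) : ℕ) : ℤ) := by rw [this]
        push_cast [Nat.cast_sub (by omega : 1 ≤ B), Nat.cast_sub (by omega : 2 ≤ B)] at this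
        linarith [this]
      set x : ℤ := ℓ N with hx
      set y : ℤ := ℓ (m+3) with hy
      have hy12 : 12 ≤ y := h12
      have hyx1 : y^2 ≤ 3*x := q3.2.2.1
      have hyx2 : 2*x ≤ y^2 := q3.2.2.2
      have hy0 : (0:ℤ) ≤ y := by linarith
      have hq1 : 12*y ≤ y*y := mul_le_mul_of_nonneg_right hy12 hy0
      have hq2 : 12*(y*y) ≤ y*(y*y) := mul_le_mul_of_nonneg_right hy12 (mul_nonneg hy0 hy0)
      have hq3 : 12*(y*y*y) ≤ y*(y*y*y) :=
        mul_le_mul_of_nonneg_right hy12 (mul_nonneg (mul_nonneg hy0 hy0) hy0)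
      -- upper bound : 2 * ℓ (N+1) ≤ x^2
      have hupper : 2 * ℓ (N+1) ≤ x^2 := by
        have : ℓ (N+1) ≤ 1 + f 0 := by rw [hsum]; linarith [hub]
        rw [hf0] at this
        have h2f : 2 * (A.choose 2 : ℤ) = x * (x - 1) := by rw [hc2, hAz]
        linarith [this, h2f, h3N]
      -- lower bound : x^2 ≤ 3 * ℓ (N+1)
      have hlower : x^2 ≤ 3 * ℓ (N+1) := by
        have hstep : 1 + f 0 - f 1 ≤ ℓ (N+1) := by rw [hsum]; linarith [hlb]
        rw [hf0, hf1] at hstep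
        have h2f : 2 * (A.choose 2 : ℤ) = x * (x - 1) := by rw [hc2, hAz]
        have h6f : 6 * (B.choose 3 : ℤ) = y * (y - 1) * (y - 2) := by rw [hc3, hBz]
        -- 6 * ℓ(N+1) ≥ 6 + 3x(x-1) - y(y-1)(y-2) ≥ 2x^2
        have hy4 : y^2 * y^2 ≤ (3*x) * (3*x) :=
          mul_le_mul hyx1 hyx1 (sq_nonneg y) (by linarith [hyx1, sq_nonneg y])
        linarith [hstep, h2f, h6f, hy4, hyx2, hq1, hq2, hq3, hy12]
      have hmonoN : ℓ N ≤ ℓ (N+1) := by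
        have hxx : 3*x ≤ x*x := mul_le_mul_of_nonneg_right h3N (by linarith)
        linarith [hlower, hxx]
      exact ⟨h3N, hmonoN, hlower, hupper⟩
  obtain ⟨-, -, hA, hB⟩ := main n
  constructor
  · rw [div_le_iff₀ (by norm_num : (0:ℚ) < 3)]
    have : ((ℓ n : ℚ))^2 ≤ 3 * (ℓ (n+1) : ℚ) := by exact_mod_cast hA
    linarith
  · rw [le_div_iff₀ (by norm_num : (0:ℚ) < 2)]
    have : 2 * (ℓ (n+1) : ℚ) ≤ ((ℓ n : ℚ))^2 := by exact_mod_cast hB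
    linarith
end

section
/- Define ℓ_n recursively by ℓ_0 = 3 and ℓ_{n+1} = 1 + Σ_{j=0}^{n} (-1)^j * binom(ℓ_{n-j}, j+2). Then for all n ≥ 1, 3·2^(2^(n-1)) ≤ ℓ_{n+1}, and for all n ≥ 0, ℓ_{n+1} ≤ 2·2^(2^n). -/
private lemma choose2 (a : ℕ) : a.choose 2 * 2 = a * (a - 1) := by
  have h := Nat.descFactorial_eq_factorial_mul_choose a 2
  simp [Nat.descFactorial, Nat.factorial] at h
  cases a with
  | zero => simp
  | succ b => simp at h ⊢; nlinarith [h]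

private lemma choose3 (a : ℕ) : a.choose 3 * 6 = a * (a - 1) * (a - 2) := by
  have h := Nat.descFactorial_eq_factorial_mul_choose a 3
  simp [Nat.descFactorial, Nat.factorial] at h
  nlinarith [h]

private lemma altsum (m : ℕ) : ∀ f : ℕ → ℤ, (∀ j, 0 ≤ f j) → (∀ j, f (j+1) ≤ f j) →
    f 0 - f 1 ≤ ∑ j ∈ Finset.range (m+1), (-1)^j * f j ∧
      ∑ j ∈ Finset.range (m+1), (-1)^j * f j ≤ f 0 := by
  induction m with
  | zero => intro f h0 h1; simp; linarith [h0 1]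
  | succ m ih =>
    intro f h0 h1
    have key : ∑ j ∈ Finset.range (m+2), (-1)^j * f j
        = f 0 - ∑ j ∈ Finset.range (m+1), (-1)^j * f (j+1) := by
      rw [Finset.sum_range_succ' (fun j => (-1)^j * f j) (m+1)]
      have h2 : ∀ i ∈ Finset.range (m+1), (-1:ℤ)^(i+1) * f (i+1) = -((-1)^i * f (i+1)) := by
        intro i _; ring
      rw [Finset.sum_congr rfl h2, Finset.sum_neg_distrib]
      simp; ring
    obtain ⟨l1, l2⟩ := ih (fun j => f (j+1)) (fun j => h0 (j+1)) (fun j => h1 (j+1))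
    rw [key]
    constructor
    · linarith
    · linarith [h1 1]

private lemma chooseMono {n r s : ℕ} (h1 : r ≤ s) (h2 : s ≤ n/2) : n.choose r ≤ n.choose s := by
  induction s with
  | zero => simp_all
  | succ t ih =>
    rcases Nat.eq_or_lt_of_le h1 with h | h
    · subst h; exact le_rfl
    · exact le_trans (ih (by omega) (by omega)) (Nat.choose_le_succ_of_lt_half_left (by omega))

private lemma chooseA {a b r : ℕ} (hb : 48 ≤ b) (hr : 2 ≤ r) (hab : b^2 ≤ 3*a) :
    b.choose (r+1) ≤ a.choose r := by
  rcases lt_or_ge b (r+1) with h | h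
  · simp [Nat.choose_eq_zero_of_lt h]
  · -- r + 1 ≤ b
    have h3 : b - 3 + 3 = b := by omega
    have hd3 : 45 ≤ b - 3 := by omega
    have hpw : ∀ s, 2 ≤ s → 3^s * b ≤ (b-3)^s := by
      intro s hs
      induction s with
      | zero => omega
      | succ t ih =>
        rcases Nat.lt_or_ge t 2 with ht | ht
        · interval_cases t
          · omega
          · show 3^2 * b ≤ (b-3)^2
            nlinarith [h3, hd3]
        · have := ih (by omega)
          calc 3^(t+1) * b = 3 * (3^t * b) := by ring
            _ ≤ 3 * (b-3)^t := by omega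
            _ ≤ (b-3) * (b-3)^t := Nat.mul_le_mul_right _ (by omega)
            _ = (b-3)^(t+1) := by ring
    set c := a + 1 - r with hc
    have hra : r ≤ a := by nlinarith
    have hbb : b*(b-3) + 3*b = b^2 := by nlinarith [h3]
    have hc3 : b*(b-3) ≤ 3*c := by omega
    have key : b^(r+1) ≤ c^r := by
      have k1 : (b*(b-3))^r ≤ (3*c)^r := Nat.pow_le_pow_left hc3 r
      have k2 : 3^r * b^(r+1) ≤ (b*(b-3))^r := by
        calc 3^r * b^(r+1) = b^r * (3^r * b) := by ring
          _ ≤ b^r * (b-3)^r := Nat.mul_le_mul_left _ (hpw r hr)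
          _ = (b*(b-3))^r := by rw [mul_pow]
      have k3 : (3*c)^r = 3^r * c^r := by rw [mul_pow]
      have : 3^r * b^(r+1) ≤ 3^r * c^r := by omega
      exact Nat.le_of_mul_le_mul_left this (by positivity)
    have d1 : Nat.factorial (r+1) * b.choose (r+1) ≤ b^(r+1) := by
      rw [← Nat.descFactorial_eq_factorial_mul_choose]
      exact Nat.descFactorial_le_pow b (r+1)
    have d2 : c^r ≤ Nat.factorial r * a.choose r := by
      rw [← Nat.descFactorial_eq_factorial_mul_choose]
      exact Nat.pow_sub_le_descFactorial a r
    have d3 : Nat.factorial r * b.choose (r+1) ≤ Nat.factorial r * a.choose r := by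
      calc Nat.factorial r * b.choose (r+1) ≤ Nat.factorial (r+1) * b.choose (r+1) :=
            Nat.mul_le_mul_right _ (Nat.factorial_le (by omega))
        _ ≤ b^(r+1) := d1
        _ ≤ c^r := key
        _ ≤ Nat.factorial r * a.choose r := d2
    exact Nat.le_of_mul_le_mul_left d3 (Nat.factorial_pos r)

private lemma pair33 (r : ℕ) (hr : 2 ≤ r) : Nat.choose 3 (r+1) ≤ Nat.choose 3 r := by
  rcases lt_or_ge r 3 with h | h
  · interval_cases r; decide
  · rw [Nat.choose_eq_zero_of_lt (by omega)]; exact Nat.zero_le _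

private lemma pair43 (r : ℕ) (hr : 2 ≤ r) : Nat.choose 3 (r+1) ≤ Nat.choose 4 r := by
  rcases lt_or_ge r 3 with h | h
  · interval_cases r; decide
  · rw [Nat.choose_eq_zero_of_lt (by omega)]; exact Nat.zero_le _

private lemma pair64 (r : ℕ) (hr : 2 ≤ r) : Nat.choose 4 (r+1) ≤ Nat.choose 6 r := by
  rcases lt_or_ge r 4 with h | h
  · interval_cases r <;> decide
  · rw [Nat.choose_eq_zero_of_lt (by omega)]; exact Nat.zero_le _

private lemma pair126 (r : ℕ) (hr : 2 ≤ r) : Nat.choose 6 (r+1) ≤ Nat.choose 12 r := by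
  rcases lt_or_ge r 6 with h | h
  · interval_cases r <;> decide
  · rw [Nat.choose_eq_zero_of_lt (by omega)]; exact Nat.zero_le _

private lemma pair4812 (r : ℕ) (hr : 2 ≤ r) : Nat.choose 12 (r+1) ≤ Nat.choose 48 r := by
  rcases lt_or_ge r 12 with h | h
  · have h1 : Nat.choose 12 (r+1) ≤ Nat.choose 12 6 := by
      simpa using Nat.choose_le_middle (r+1) 12
    have h2 : Nat.choose 48 2 ≤ Nat.choose 48 r := chooseMono hr (by omega)
    have h3 : Nat.choose 12 6 = 924 := by decide
    have h4 : Nat.choose 48 2 = 1128 := by rw [Nat.choose_two_right]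
    omega
  · rw [Nat.choose_eq_zero_of_lt (by omega)]; exact Nat.zero_le _


set_option maxHeartbeats 1000000 in
private lemma master (ℓ : ℕ → ℤ) (h0 : ℓ 0 = 3) (v1 : ℓ 1 = 4) (v2 : ℓ 2 = 6) (v3 : ℓ 3 = 12)
    (v4 : ℓ 4 = 48) (v5 : ℓ 5 = 924)
    (hrec : ∀ n : ℕ, ℓ (n + 1) =
      1 + ∑ j ∈ Finset.range (n + 1), (-1) ^ j * ((ℓ (n - j)).toNat.choose (j + 2) : ℤ)) :
    ∀ n : ℕ, (3 ≤ ℓ n ∧ (4 ≤ n → 48 ≤ ℓ n)) ∧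
      (1 ≤ n → (ℓ (n-1))^2 ≤ 3 * ℓ n ∧ 2 * ℓ n ≤ (ℓ (n-1))^2) := by
  intro n
  induction n using Nat.strong_induction_on with
  | _ n IH =>
  rcases lt_or_ge n 6 with h6 | h6
  · interval_cases n <;> refine ⟨⟨by omega, fun h => by omega⟩, fun h => ⟨?_, ?_⟩⟩ <;>
      simp [h0, v1, v2, v3, v4, v5] <;> norm_num
  · obtain ⟨k, rfl⟩ : ∃ k, n = k + 1 := ⟨n-1, by omega⟩
    have hk5 : 5 ≤ k := by omega
    -- antitone
    have hanti : ∀ j : ℕ, ((ℓ (k - (j+1))).toNat.choose ((j+1) + 2) : ℤ) ≤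
        ((ℓ (k - j)).toNat.choose (j + 2) : ℤ) := by
      intro j
      have key : (ℓ (k - (j+1))).toNat.choose ((j+1)+2) ≤ (ℓ (k-j)).toNat.choose (j+2) := by
        rcases lt_or_ge j k with hj | hj
        · obtain ⟨m, hme, hm1⟩ : ∃ m, k - j = m ∧ 1 ≤ m := ⟨k - j, rfl, by omega⟩
          have e1 : k - (j+1) = m - 1 := by omega
          rw [e1, hme]
          rcases lt_or_ge m 5 with hsm | hsm
          · interval_cases m
            · simp only [show (1:ℕ)-1 = 0 from rfl, h0, v1]
              norm_num
              exact pair43 (j+2) (by omega)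
            · simp only [show (2:ℕ)-1 = 1 from rfl, v1, v2]
              norm_num
              exact pair64 (j+2) (by omega)
            · simp only [show (3:ℕ)-1 = 2 from rfl, v2, v3]
              norm_num
              exact pair126 (j+2) (by omega)
            · simp only [show (4:ℕ)-1 = 3 from rfl, v3, v4]
              norm_num
              exact pair4812 (j+2) (by omega)
          · have h1 := (IH m (by omega)).2 (by omega)
            have h2 := ((IH (m-1) (by omega)).1).2 (by omega)
            have h3 := ((IH m (by omega)).1).1
            have eb : ((ℓ (m-1)).toNat : ℤ) = ℓ (m-1) := Int.toNat_of_nonneg (by linarith)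
            have ea : ((ℓ m).toNat : ℤ) = ℓ m := Int.toNat_of_nonneg (by linarith)
            apply chooseA
            · omega
            · omega
            · have hh := h1.1
              rw [← eb, ← ea] at hh
              exact_mod_cast hh
        · have e1 : k - j = 0 := by omega
          have e2 : k - (j+1) = 0 := by omega
          rw [e1, e2, h0]
          norm_num
          exact pair33 (j+2) (by omega)
      exact_mod_cast key
    have hpos : ∀ j : ℕ, (0:ℤ) ≤ ((ℓ (k - j)).toNat.choose (j + 2) : ℤ) :=
      fun j => Int.natCast_nonneg _
    have H := altsum k (fun j => ((ℓ (k - j)).toNat.choose (j + 2) : ℤ)) hpos hanti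
    beta_reduce at H
    simp only [Nat.sub_zero] at H
    obtain ⟨Hlow, Hup⟩ := H
    have hr := hrec k
    -- facts about ℓ k, ℓ (k-1)
    have h3k := ((IH k (by omega)).1).2 (by omega)
    have h3k1 := ((IH (k-1) (by omega)).1).2 (by omega)
    have hsq := (IH k (by omega)).2 (by omega)
    have eA : ((ℓ k).toNat : ℤ) = ℓ k := Int.toNat_of_nonneg (by linarith)
    have eB : ((ℓ (k-1)).toNat : ℤ) = ℓ (k-1) := Int.toNat_of_nonneg (by linarith)
    have hA1 : 1 ≤ (ℓ k).toNat := by omega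
    have hB2 : 2 ≤ (ℓ (k-1)).toNat := by omega
    have c2 : ((ℓ k).toNat.choose 2 : ℤ) * 2 = ℓ k * (ℓ k - 1) := by
      have := choose2 (ℓ k).toNat
      zify [hA1] at this
      rw [eA] at this
      exact this
    have c3 : ((ℓ (k-1)).toNat.choose 3 : ℤ) * 6 = ℓ (k-1) * (ℓ (k-1) - 1) * (ℓ (k-1) - 2) := by
      have := choose3 (ℓ (k-1)).toNat
      zify [hB2, show 1 ≤ (ℓ (k-1)).toNat by omega] at this
      rw [eB] at this
      exact this
    -- bounds on ℓ (k+1)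
    have up : ℓ (k+1) ≤ 1 + ((ℓ k).toNat.choose 2 : ℤ) := by rw [hr]; linarith
    have low : 1 + ((ℓ k).toNat.choose 2 : ℤ) - ((ℓ (k-1)).toNat.choose 3 : ℤ) ≤ ℓ (k+1) := by
      rw [hr]; linarith
    clear hanti hpos Hlow Hup hr hrec IH h0 v1 v2 v3 v4 v5
    set x := ℓ k with hx
    set y := ℓ (k-1) with hy
    have G4 : 2 * ℓ (k+1) ≤ x^2 := by nlinarith [up, c2, h3k]
    have m1 : y^2*(y^2-9) ≤ (3*x)*(3*x-9) := by
      have a1 : y^2 - 9 ≤ 3*x - 9 := by linarith [hsq.1]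
      have a2 : (0:ℤ) ≤ y^2 - 9 := by nlinarith [h3k1]
      have a3 : (0:ℤ) ≤ 3*x := by linarith [h3k]
      exact mul_le_mul hsq.1 a1 a2 a3
    have m2 : 9*(y*(y-1)*(y-2)) ≤ y^2*(y^2-9) := by
      nlinarith [mul_nonneg (mul_nonneg (by linarith : (0:ℤ) ≤ y - 48)
        (by linarith : (0:ℤ) ≤ y)) (by linarith : (0:ℤ) ≤ y), sq_nonneg y, h3k1]
    have G3 : x^2 ≤ 3 * ℓ (k+1) := by nlinarith [m1, m2, low, c2, c3]
    have G1 : 48 ≤ ℓ (k+1) := by nlinarith [G3, h3k]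
    refine ⟨⟨by linarith, fun _ => G1⟩, fun _ => ?_⟩
    simp only [Nat.add_sub_cancel]
    exact ⟨G3, G4⟩

theorem ell_double_exponential (ℓ : ℕ → ℤ) (h0 : ℓ 0 = 3)
    (hrec : ∀ n : ℕ, ℓ (n + 1) =
      1 + ∑ j ∈ Finset.range (n + 1), (-1) ^ j * ((ℓ (n - j)).toNat.choose (j + 2) : ℤ)) :
    (∀ n : ℕ, 1 ≤ n → 3 * 2 ^ (2 ^ (n - 1)) ≤ ℓ (n + 1)) ∧
      (∀ n : ℕ, ℓ (n + 1) ≤ 2 * 2 ^ (2 ^ n)) := by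
  have v1 : ℓ 1 = 4 := by
    have h := hrec 0
    norm_num [Nat.choose, Finset.sum_range_succ, h0] at h
    exact h
  have v2 : ℓ 2 = 6 := by
    have h := hrec 1
    norm_num [Nat.choose, Finset.sum_range_succ, h0, v1] at h
    exact h
  have v3 : ℓ 3 = 12 := by
    have h := hrec 2
    norm_num [Nat.choose, Finset.sum_range_succ, h0, v1, v2] at h
    exact h
  have v4 : ℓ 4 = 48 := by
    have h := hrec 3
    norm_num [Nat.choose, Finset.sum_range_succ, h0, v1, v2, v3] at h
    exact h
  have v5 : ℓ 5 = 924 := by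
    have h := hrec 4
    norm_num [Nat.choose, Finset.sum_range_succ, h0, v1, v2, v3, v4] at h
    exact h
  have M := master ℓ h0 v1 v2 v3 v4 v5 hrec
  have auxlow : ∀ m : ℕ, 3 * 2^(2^m) ≤ ℓ (m+2) := by
    intro m
    induction m with
    | zero => rw [v2]; norm_num
    | succ m ih =>
      have h := ((M (m+3)).2 (by omega)).1
      rw [show m+3-1 = m+2 from rfl, show m+3 = m+2+1 from rfl] at h
      have ha : (0:ℤ) < 2^(2^m) := by positivity
      have hp : (3 * 2^(2^m)) * (3 * 2^(2^m)) ≤ ℓ (m+2) * ℓ (m+2) :=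
        mul_le_mul ih ih (by positivity) (le_trans (by positivity) ih)
      have e : (2:ℤ)^(2^(m+1)) = 2^(2^m) * 2^(2^m) := by
        rw [← pow_add]
        congr 1
        rw [pow_succ, mul_two]
      rw [show m+1+2 = (m+2)+1 from rfl]
      rw [e]
      nlinarith [h, hp]
    
  have auxup : ∀ m : ℕ, ℓ (m+1) ≤ 2 * 2^(2^m) := by
    intro m
    induction m with
    | zero => rw [v1]; norm_num
    | succ m ih =>
      have h := ((M (m+2)).2 (by omega)).2
      rw [show m+2-1 = m+1 from rfl, show m+2 = m+1+1 from rfl] at h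
      have h3 := ((M (m+1)).1).1
      have hp : ℓ (m+1) * ℓ (m+1) ≤ (2 * 2^(2^m)) * (2 * 2^(2^m)) :=
        mul_le_mul ih ih (by linarith) (by positivity)
      have e : (2:ℤ)^(2^(m+1)) = 2^(2^m) * 2^(2^m) := by
        rw [← pow_add]
        congr 1
        rw [pow_succ, mul_two]
      rw [e]
      nlinarith [h, hp]
  constructor
  · intro n hn
    obtain ⟨m, rfl⟩ : ∃ m, n = m + 1 := ⟨n - 1, by omega⟩
    exact auxlow m
  · intro n
    exact auxup n
end

section
/- Define ℓ_n recursively by ℓ_0 = 3 and ℓ_{n+1} = 1 + Σ_{j=0}^{n} (-1)^j * binom(ℓ_{n-j}, j+2). Then for all n ≥ 0, ℓ_n = 3 + Σ_{j=0}^{n-1} (-1)^j * binom(ℓ_{n-j-1} - 1, j+2). -/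
lemma arith1 {x y : ℤ} (hx : 11 ≤ x) (key : 6 + x * (x - 1) ≤ 3 * y) : 2 ≤ y := by nlinarith
lemma arith2 {x y : ℤ} (hx : 11 ≤ x) (key : 6 + x * (x - 1) ≤ 3 * y) : x ≤ y := by nlinarith
lemma arith3 {x y : ℤ} (hx : 11 ≤ x) (key : 6 + x * (x - 1) ≤ 3 * y) :
    x * x * (x - 1) ≤ y * (y - 1) := by
  nlinarith [mul_nonneg (mul_nonneg (mul_nonneg (sub_nonneg.2 hx) (by positivity : (0:ℤ) ≤ x))
    (by positivity : (0:ℤ) ≤ x)) (by positivity : (0:ℤ) ≤ x), sq_nonneg (x * (x - 1)),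
    mul_self_nonneg (x - 1)]

lemma dom_lemma {a b k : ℕ} (hk : 2 ≤ k) (hba : b ≤ a)
    (h : b * b * (b - 1) ≤ a * (a - 1)) : b.choose (k + 1) ≤ a.choose k := by
  rcases lt_or_ge b (k + 1) with hb | hb
  · simp [Nat.choose_eq_zero_of_lt hb]
  · have hkb : k ≤ b := by omega
    have hka : k ≤ a := le_trans hkb hba
    have ha2 : 2 ≤ a := le_trans hk hka
    have e1 : a.choose k * k.choose 2 = a.choose 2 * (a - 2).choose (k - 2) :=
      Nat.choose_mul hk
    have e2 : b.choose k * k.choose 2 = b.choose 2 * (b - 2).choose (k - 2) :=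
      Nat.choose_mul hk
    have mono : (b - 2).choose (k - 2) ≤ (a - 2).choose (k - 2) :=
      Nat.choose_le_choose _ (by omega)
    have key : b.choose k * a.choose 2 * k.choose 2 ≤ a.choose k * b.choose 2 * k.choose 2 := by
      calc b.choose k * a.choose 2 * k.choose 2
          = a.choose 2 * (b.choose k * k.choose 2) := by ring
        _ = a.choose 2 * (b.choose 2 * (b - 2).choose (k - 2)) := by rw [e2]
        _ ≤ a.choose 2 * (b.choose 2 * (a - 2).choose (k - 2)) :=
            Nat.mul_le_mul_left _ (Nat.mul_le_mul_left _ mono)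
        _ = b.choose 2 * (a.choose 2 * (a - 2).choose (k - 2)) := by ring
        _ = b.choose 2 * (a.choose k * k.choose 2) := by rw [e1]
        _ = a.choose k * b.choose 2 * k.choose 2 := by ring
    have hk2pos : 0 < k.choose 2 := Nat.choose_pos hk
    have key2 : b.choose k * a.choose 2 ≤ a.choose k * b.choose 2 :=
      Nat.le_of_mul_le_mul_right key hk2pos
    have ta : a.choose 2 * 2 = a * (a - 1) := by
      have := Nat.choose_succ_right_eq a 1
      simpa [Nat.choose_one_right] using this
    have tb : b.choose 2 * 2 = b * (b - 1) := by
      have := Nat.choose_succ_right_eq b 1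
      simpa [Nat.choose_one_right] using this
    have hb2 : b * b.choose 2 ≤ a.choose 2 := by
      have h4 : b * (b.choose 2 * 2) ≤ a.choose 2 * 2 := by
        rw [ta, tb, ← Nat.mul_assoc]; exact h
      have e3 : b * (b.choose 2 * 2) = b * b.choose 2 * 2 := by ring
      omega
    have step : b.choose (k + 1) * (k + 1) = b.choose k * (b - k) :=
      Nat.choose_succ_right_eq b k
    have final : b.choose (k + 1) * ((k + 1) * a.choose 2)
        ≤ a.choose k * ((k + 1) * a.choose 2) := by
      calc b.choose (k + 1) * ((k + 1) * a.choose 2)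
          = b.choose (k + 1) * (k + 1) * a.choose 2 := by ring
        _ = b.choose k * (b - k) * a.choose 2 := by rw [step]
        _ ≤ b.choose k * b * a.choose 2 :=
            Nat.mul_le_mul_right _ (Nat.mul_le_mul_left _ (Nat.sub_le _ _))
        _ = b.choose k * a.choose 2 * b := by ring
        _ ≤ a.choose k * b.choose 2 * b := Nat.mul_le_mul_right _ key2
        _ = a.choose k * (b * b.choose 2) := by ring
        _ ≤ a.choose k * a.choose 2 := Nat.mul_le_mul_left _ hb2
        _ ≤ a.choose k * ((k + 1) * a.choose 2) :=
            Nat.mul_le_mul_left _ (Nat.le_mul_of_pos_left _ (by omega))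
    have ha2pos : 0 < a.choose 2 := Nat.choose_pos ha2
    exact Nat.le_of_mul_le_mul_right final (by positivity)

section EllAux

variable (ℓ : ℕ → ℤ)

def av (m : ℕ) : ℕ := (ℓ m - 1).toNat

def TT (n k : ℕ) : ℤ :=
  ∑ j ∈ Finset.range (n + 1), (-1 : ℤ) ^ j * ((av ℓ (n - j)).choose (j + k) : ℤ)

lemma alt_peel (g : ℕ → ℕ) (n k : ℕ) :
    ∑ j ∈ Finset.range (n + 1), (-1 : ℤ) ^ j * ((g (n - j)).choose (j + k) : ℤ)
      = ((g n).choose k : ℤ)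
        - ∑ j ∈ Finset.range n, (-1 : ℤ) ^ j * ((g (n - j - 1)).choose (j + (k + 1)) : ℤ) := by
  rw [Finset.sum_range_succ']
  have h1 : ∀ i ∈ Finset.range n,
      (-1 : ℤ) ^ (i + 1) * ((g (n - (i + 1))).choose ((i + 1) + k) : ℤ)
        = -((-1 : ℤ) ^ i * ((g (n - i - 1)).choose (i + (k + 1)) : ℤ)) := by
    intro i _
    have e1 : n - (i + 1) = n - i - 1 := by omega
    have e2 : (i + 1) + k = i + (k + 1) := by omega
    rw [e1, e2, pow_succ]; ring
  rw [Finset.sum_congr rfl h1, Finset.sum_neg_distrib]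
  simp
  ring

lemma TT_succ (n k : ℕ) :
    TT ℓ (n + 1) k = ((av ℓ (n + 1)).choose k : ℤ) - TT ℓ n (k + 1) := by
  unfold TT
  rw [alt_peel]
  congr 1
  refine Finset.sum_congr rfl fun j hj => ?_
  have e : n + 1 - j - 1 = n - j := by omega
  rw [e]

def P (n : ℕ) : Prop :=
  1 ≤ ℓ n ∧
  ℓ n = 3 + ∑ j ∈ Finset.range n, (-1 : ℤ) ^ j * ((av ℓ (n - j - 1)).choose (j + 2) : ℤ) ∧
  (∀ k, 2 ≤ k → 0 ≤ TT ℓ n k ∧ TT ℓ n k ≤ ((av ℓ n).choose k : ℤ)) ∧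
  (1 ≤ n → av ℓ (n - 1) ≤ av ℓ n ∧
    av ℓ (n - 1) * av ℓ (n - 1) * (av ℓ (n - 1) - 1) ≤ av ℓ n * (av ℓ n - 1)) ∧
  2 ≤ av ℓ n ∧ (3 ≤ n → 11 ≤ av ℓ n)

end EllAux

section EllMain

variable (ℓ : ℕ → ℤ) (h0 : ℓ 0 = 3)
  (hrec : ∀ n : ℕ, ℓ (n + 1) =
      1 + ∑ j ∈ Finset.range (n + 1), (-1) ^ j * ((ℓ (n - j)).toNat.choose (j + 2) : ℤ))

include h0 hrec

lemma ell1 : ℓ 1 = 4 := by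
  have h := hrec 0
  rw [Finset.sum_range_one] at h
  norm_num [h0] at h
  exact h

lemma ell2 : ℓ 2 = 6 := by
  have h := hrec 1
  rw [Finset.sum_range_succ, Finset.sum_range_one] at h
  norm_num [h0, ell1 ℓ h0 hrec] at h
  exact h

lemma ell3 : ℓ 3 = 12 := by
  have h := hrec 2
  rw [Finset.sum_range_succ, Finset.sum_range_succ, Finset.sum_range_one] at h
  norm_num [h0, ell1 ℓ h0 hrec, ell2 ℓ h0 hrec] at h
  exact h

lemma master_s10 : ∀ n, P ℓ n := by
  intro n
  induction n using Nat.strong_induction_on with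
  | _ n ih =>
  match n with
  | 0 =>
    refine ⟨by rw [h0]; norm_num, by simp [h0], ?_, by omega, ?_, by omega⟩
    · intro k hk
      have hv : av ℓ 0 = 2 := by unfold av; rw [h0]; rfl
      unfold TT
      rw [Finset.sum_range_one]
      simp [hv]
    · show 2 ≤ av ℓ 0
      unfold av; rw [h0]; rfl
  | (n + 1) =>
    obtain ⟨hA, hB, hD, hC, hE2, hE11⟩ := ih n (by omega)
    have hcast : ∀ m, 1 ≤ ℓ m → (av ℓ m : ℤ) = ℓ m - 1 := by
      intro m hm; unfold av; omega
    have hsum : ∑ j ∈ Finset.range (n + 1), (-1 : ℤ) ^ j * ((ℓ (n - j)).toNat.choose (j + 2) : ℤ)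
        = (∑ j ∈ Finset.range (n + 1), (-1 : ℤ) ^ j * ((av ℓ (n - j)).choose (j + 1) : ℤ))
          + TT ℓ n 2 := by
      unfold TT
      rw [← Finset.sum_add_distrib]
      refine Finset.sum_congr rfl fun j hj => ?_
      have h1 : 1 ≤ ℓ (n - j) := (ih (n - j) (by omega)).1
      have e : (ℓ (n - j)).toNat = av ℓ (n - j) + 1 := by unfold av; omega
      rw [e, Nat.choose_succ_succ]
      push_cast
      ring
    have hS : ∑ j ∈ Finset.range (n + 1), (-1 : ℤ) ^ j * ((av ℓ (n - j)).choose (j + 1) : ℤ)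
        = 2 := by
      rw [alt_peel (av ℓ) n 1, Nat.choose_one_right]
      have e2 : ∑ j ∈ Finset.range n, (-1 : ℤ) ^ j * ((av ℓ (n - j - 1)).choose (j + (1 + 1)) : ℤ)
          = ∑ j ∈ Finset.range n, (-1 : ℤ) ^ j * ((av ℓ (n - j - 1)).choose (j + 2) : ℤ) := by
        norm_num
      rw [e2]
      have hav : (av ℓ n : ℤ) = ℓ n - 1 := hcast n hA
      have hsum2 : ∑ j ∈ Finset.range n, (-1 : ℤ) ^ j * ((av ℓ (n - j - 1)).choose (j + 2) : ℤ)
          = ℓ n - 3 := by linarith [hB]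
      rw [hsum2, hav]; ring
    have hBn1 : ℓ (n + 1) = 3 + TT ℓ n 2 := by
      rw [hrec n, hsum, hS]; ring
    have hT2 := hD 2 (by norm_num)
    have hA1 : 1 ≤ ℓ (n + 1) := by linarith [hT2.1, hBn1.ge, hBn1.le]
    have havn1 : (av ℓ (n + 1) : ℤ) = 2 + TT ℓ n 2 := by
      rw [hcast (n + 1) hA1, hBn1]; ring
    have hBgoal : ℓ (n + 1) = 3 + ∑ j ∈ Finset.range (n + 1),
        (-1 : ℤ) ^ j * ((av ℓ (n + 1 - j - 1)).choose (j + 2) : ℤ) := by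
      rw [hBn1]
      congr 1
      unfold TT
      refine Finset.sum_congr rfl fun j hj => ?_
      have e : n + 1 - j - 1 = n - j := by omega
      rw [e]
    have hCgoal : av ℓ n ≤ av ℓ (n + 1) ∧
        av ℓ n * av ℓ n * (av ℓ n - 1) ≤ av ℓ (n + 1) * (av ℓ (n + 1) - 1) := by
      rcases Nat.lt_or_ge n 3 with h3 | h3
      · have e0 : av ℓ 0 = 2 := by unfold av; rw [h0]; rfl
        have e1 : av ℓ 1 = 3 := by unfold av; rw [ell1 ℓ h0 hrec]; rfl
        have e2 : av ℓ 2 = 5 := by unfold av; rw [ell2 ℓ h0 hrec]; rfl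
        have e3 : av ℓ 3 = 11 := by unfold av; rw [ell3 ℓ h0 hrec]; rfl
        interval_cases n <;> simp [e0, e1, e2, e3]
      · obtain ⟨p, rfl⟩ : ∃ p, n = p + 1 := ⟨n - 1, by omega⟩
        have hx11 : 11 ≤ av ℓ (p + 1) := hE11 (by omega)
        have hCn := hC (by omega)
        have hDp := (ih p (by omega)).2.2.1 3 (by norm_num)
        have hTsucc := TT_succ ℓ p 2
        set b := av ℓ p with hbdef
        set x := av ℓ (p + 1) with hxdef
        set y := av ℓ (p + 2) with hydef
        have e3 : b.choose 3 * 6 = b * (b - 1) * (b - 2) := by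
          have a1 := Nat.choose_succ_right_eq b 2
          have a2 := Nat.choose_succ_right_eq b 1
          rw [Nat.choose_one_right] at a2
          calc b.choose 3 * 6 = b.choose 3 * 3 * 2 := by ring
            _ = b.choose 2 * (b - 2) * 2 := by rw [a1]
            _ = b.choose 2 * 2 * (b - 2) := by ring
            _ = b * (b - 1) * (b - 2) := by rw [a2]
        have e2x : x.choose 2 * 2 = x * (x - 1) := by
          have a2 := Nat.choose_succ_right_eq x 1
          rwa [Nat.choose_one_right] at a2
        have hbb : b * (b - 1) * (b - 2) ≤ b * b * (b - 1) := by
          calc b * (b - 1) * (b - 2) ≤ b * (b - 1) * b :=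
                Nat.mul_le_mul_left _ (by omega)
            _ = b * b * (b - 1) := by ring
        have h3c : 3 * b.choose 3 ≤ x.choose 2 := by
          have hc2 : b * b * (b - 1) ≤ x * (x - 1) := hCn.2
          omega
        have hxz : (11 : ℤ) ≤ (x : ℤ) := by exact_mod_cast hx11
        have h5 : ((x.choose 2 : ℕ) : ℤ) * 2 = (x : ℤ) * ((x : ℤ) - 1) := by
          have hcst : ((x.choose 2 * 2 : ℕ) : ℤ) = ((x * (x - 1) : ℕ) : ℤ) := by
            exact_mod_cast e2x
          push_cast [Nat.cast_sub (show 1 ≤ x by omega)] at hcst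
          linarith
        have key : 6 + (x : ℤ) * ((x : ℤ) - 1) ≤ 3 * (y : ℤ) := by
          have h2 : TT ℓ (p + 1) 2 = ((x.choose 2 : ℕ) : ℤ) - TT ℓ p 3 := hTsucc
          have h3' : TT ℓ p 3 ≤ ((b.choose 3 : ℕ) : ℤ) := hDp.2
          have h4 : (3 : ℤ) * ((b.choose 3 : ℕ) : ℤ) ≤ ((x.choose 2 : ℕ) : ℤ) := by
            exact_mod_cast h3c
          have h1 : (y : ℤ) = 2 + TT ℓ (p + 1) 2 := havn1
          linarith
        have hy2 : 2 ≤ y := by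
          have : (2 : ℤ) ≤ (y : ℤ) := arith1 hxz key
          exact_mod_cast this
        constructor
        · have : (x : ℤ) ≤ (y : ℤ) := arith2 hxz key
          exact_mod_cast this
        · zify [show 1 ≤ x by omega, show 1 ≤ y by omega]
          exact arith3 hxz key
    have hE2' : 2 ≤ av ℓ (n + 1) := le_trans hE2 hCgoal.1
    have hE11' : 3 ≤ n + 1 → 11 ≤ av ℓ (n + 1) := by
      intro hn3
      rcases Nat.lt_or_ge n 3 with h | h
      · have hn2 : n = 2 := by omega
        subst hn2
        show 11 ≤ av ℓ 3
        unfold av; rw [ell3 ℓ h0 hrec]; rfl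
      · exact le_trans (hE11 h) hCgoal.1
    have hDgoal : ∀ k, 2 ≤ k → 0 ≤ TT ℓ (n + 1) k ∧
        TT ℓ (n + 1) k ≤ ((av ℓ (n + 1)).choose k : ℤ) := by
      intro k hk
      have ht := TT_succ ℓ n k
      have hDk := hD (k + 1) (by omega)
      have hdom : (av ℓ n).choose (k + 1) ≤ (av ℓ (n + 1)).choose k :=
        dom_lemma hk hCgoal.1 hCgoal.2
      have hdomz : ((av ℓ n).choose (k + 1) : ℤ) ≤ ((av ℓ (n + 1)).choose k : ℤ) := by
        exact_mod_cast hdom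
      constructor
      · rw [ht]; linarith [hDk.2]
      · rw [ht]; linarith [hDk.1]
    exact ⟨hA1, hBgoal, hDgoal, fun _ => hCgoal, hE2', hE11'⟩

end EllMain

theorem ell_alt_recursion' (ℓ : ℕ → ℤ) (h0 : ℓ 0 = 3)
    (hrec : ∀ n : ℕ, ℓ (n + 1) =
      1 + ∑ j ∈ Finset.range (n + 1), (-1) ^ j * ((ℓ (n - j)).toNat.choose (j + 2) : ℤ)) (n : ℕ) :
    ℓ n = 3 + ∑ j ∈ Finset.range n,
      (-1) ^ j * (((ℓ (n - j - 1) - 1).toNat.choose (j + 2) : ℤ)) := by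
  exact (master_s10 ℓ h0 hrec n).2.1
end

section
/- Suppose two LCBC functions Q(N,t) = Σ_s c_s · binom(N + t + s - 1, N - 1) and Q'(N,t) = Σ_s c'_s · binom(N + t + s - 1, N - 1) (finitely many nonzero integer coefficients c_s, c'_s, s ∈ ℤ) agree at t = d for all sufficiently large N. Then c_s = c'_s for all s ≥ -d, and Q(N, d+1) - Q'(N, d+1) = c_{-d-1} - c'_{-d-1} for all sufficiently large N. -/
/-- The binomial coefficient function `binom(N + t + s - 1, N - 1)` for integer arguments,
equal to `0` when the top argument is negative (or less than the bottom). -/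
def lcbcTerm (N t s : ℤ) : ℤ :=
  if 0 ≤ N + t + s - 1 then ((N + t + s - 1).toNat.choose (N - 1).toNat : ℤ) else 0

lemma lcbcTerm_of_neg (N t s : ℤ) (hN : 1 ≤ N) (h : t + s < 0) : lcbcTerm N t s = 0 := by
  unfold lcbcTerm
  split
  · have hlt : (N + t + s - 1).toNat < (N - 1).toNat := by omega
    rw [Nat.choose_eq_zero_of_lt hlt, Nat.cast_zero]
  · rfl

lemma lcbcTerm_of_nonneg (N t s : ℤ) (hN : 1 ≤ N) (h : 0 ≤ t + s) :
    lcbcTerm N t s = ((((N - 1).toNat + (t + s).toNat).choose ((t + s).toNat) : ℕ) : ℤ) := by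
  unfold lcbcTerm
  rw [if_pos (by omega)]
  have h1 : (N + t + s - 1).toNat = (N - 1).toNat + (t + s).toNat := by omega
  rw [h1]
  congr 1
  have h2 := Nat.choose_symm (Nat.le_add_left ((t + s).toNat) ((N - 1).toNat))
  simpa using h2

lemma keyA : ∀ (m : ℕ) (a : ℕ → ℤ) (n₀ : ℕ),
    (∀ n, n₀ ≤ n → ∑ k ∈ Finset.range m, a k * ((n + k).choose k : ℤ) = 0) →
    ∀ k < m, a k = 0 := by
  intro m
  induction m with
  | zero => intro a n₀ h k hk; exact absurd hk (Nat.not_lt_zero k)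
  | succ m ih =>
    intro a n₀ h k hk
    have hstep : ∀ n, n₀ + 1 ≤ n →
        ∑ j ∈ Finset.range m, a (j + 1) * ((n + j).choose j : ℤ) = 0 := by
      intro n hn
      obtain ⟨n', rfl⟩ : ∃ n', n = n' + 1 := ⟨n - 1, by omega⟩
      have h1 := h n' (by omega)
      have h2 := h (n' + 1) (by omega)
      rw [Finset.sum_range_succ'] at h1 h2
      have goal_eq : ∑ j ∈ Finset.range m, a (j + 1) * ((n' + 1 + j).choose j : ℤ)
          = (∑ i ∈ Finset.range m, a (i + 1) * ((n' + 1 + (i + 1)).choose (i + 1) : ℤ))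
            - ∑ i ∈ Finset.range m, a (i + 1) * ((n' + (i + 1)).choose (i + 1) : ℤ) := by
        rw [← Finset.sum_sub_distrib]
        apply Finset.sum_congr rfl
        intro j _
        have hps : (n' + 1 + (j + 1)).choose (j + 1)
            = (n' + 1 + j).choose j + (n' + (j + 1)).choose (j + 1) := by
          have hcs := Nat.choose_succ_succ (n' + j + 1) j
          have e1 : n' + 1 + (j + 1) = (n' + j + 1) + 1 := by omega
          have e2 : n' + 1 + j = n' + j + 1 := by omega
          have e3 : n' + (j + 1) = n' + j + 1 := by omega
          rw [e1, e2, e3, hcs]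
        rw [hps]; push_cast; ring
      rw [goal_eq]
      simp only [Nat.add_zero, Nat.choose_zero_right, Nat.cast_one, mul_one] at h1 h2
      linarith
    have ih' := ih (fun j => a (j + 1)) (n₀ + 1) hstep
    have ha0 : a 0 = 0 := by
      have h0 := h n₀ le_rfl
      rw [Finset.sum_range_succ'] at h0
      have hz : ∑ i ∈ Finset.range m, a (i + 1) * ((n₀ + (i + 1)).choose (i + 1) : ℤ) = 0 :=
        Finset.sum_eq_zero fun i hi => by
          have hai : a (i + 1) = 0 := ih' i (Finset.mem_range.mp hi)
          rw [hai, zero_mul]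
      rw [hz] at h0
      simpa using h0
    match k, hk with
    | 0, _ => exact ha0
    | (k + 1), hk => exact ih' k (by omega)

theorem lcbc_agreement (S : Finset ℤ) (c c' : ℤ → ℤ)
    (hc : ∀ s ∉ S, c s = 0) (hc' : ∀ s ∉ S, c' s = 0) (d : ℤ)
    (hagree : ∃ N₀ : ℤ, ∀ N : ℤ, N₀ ≤ N →
      ∑ s ∈ S, c s * lcbcTerm N d s = ∑ s ∈ S, c' s * lcbcTerm N d s) :
    (∀ s : ℤ, -d ≤ s → c s = c' s) ∧
      ∃ N₁ : ℤ, ∀ N : ℤ, N₁ ≤ N →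
        ∑ s ∈ S, c s * lcbcTerm N (d + 1) s - ∑ s ∈ S, c' s * lcbcTerm N (d + 1) s =
          c (-d - 1) - c' (-d - 1) := by
  classical
  obtain ⟨N₀, hag⟩ := hagree
  set a : ℤ → ℤ := fun s => c s - c' s with ha_def
  have ha0 : ∀ s ∉ S, a s = 0 := fun s hs => by simp [ha_def, hc s hs, hc' s hs]
  set m : ℕ := (S.sup fun s => (d + s).toNat) + 1 with hm_def
  have hm : ∀ s ∈ S, (d + s).toNat < m := fun s hs =>
    Nat.lt_succ_of_le (Finset.le_sup (f := fun s => (d + s).toNat) hs)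
  set n₀ : ℕ := (max N₀ 1).toNat with hn₀_def
  have hn₀ : (n₀ : ℤ) = max N₀ 1 := Int.toNat_of_nonneg (by
    have := le_max_right N₀ (1 : ℤ); omega)
  have hkey : ∀ n, n₀ ≤ n →
      ∑ k ∈ Finset.range m, a ((k : ℤ) - d) * ((n + k).choose k : ℤ) = 0 := by
    intro n hn
    set N : ℤ := (n : ℤ) + 1 with hN_def
    have hN1 : 1 ≤ N := by omega
    have hNn : (N - 1).toNat = n := by omega
    have hNge : N₀ ≤ N := by
      have h1 : (n₀ : ℤ) ≤ (n : ℤ) := by exact_mod_cast hn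
      have h2 := le_max_left N₀ (1 : ℤ)
      omega
    have hsum0 : ∑ s ∈ S, a s * lcbcTerm N d s = 0 := by
      have hd := hag N hNge
      simp only [ha_def, sub_mul]
      rw [Finset.sum_sub_distrib, hd, sub_self]
    have e1 : ∑ s ∈ S.filter (fun s => 0 ≤ d + s), a s * lcbcTerm N d s
        = ∑ s ∈ S, a s * lcbcTerm N d s := by
      apply Finset.sum_filter_of_ne
      intro s hs hne
      by_contra hlt
      exact hne (by rw [lcbcTerm_of_neg N d s hN1 (by omega), mul_zero])
    have e2 : ((Finset.range m).filter (fun k : ℕ => ((k : ℤ) - d) ∈ S)).sum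
          (fun k : ℕ => a ((k : ℤ) - d) * (((n + k).choose k : ℕ) : ℤ))
        = ∑ k ∈ Finset.range m, a ((k : ℤ) - d) * (((n + k).choose k : ℕ) : ℤ) := by
      apply Finset.sum_filter_of_ne
      intro k hk hne
      by_contra hns
      exact hne (by rw [ha0 _ hns, zero_mul])
    rw [← e2, ← hsum0, ← e1]
    symm
    apply Finset.sum_nbij' (i := fun s => (d + s).toNat) (j := fun k => (k : ℤ) - d)
    · intro s hs
      simp only [Finset.mem_filter, Finset.mem_range] at hs ⊢
      exact ⟨hm s hs.1, by rw [show ((d + s).toNat : ℤ) - d = s by omega]; exact hs.1⟩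
    · intro k hk
      simp only [Finset.mem_filter, Finset.mem_range] at hk ⊢
      exact ⟨hk.2, by omega⟩
    · intro s hs
      simp only [Finset.mem_filter, Finset.mem_range] at hs
      omega
    · intro k hk
      simp only [Finset.mem_filter, Finset.mem_range] at hk
      omega
    · intro s hs
      simp only [Finset.mem_filter, Finset.mem_range] at hs
      have hs' : ((d + s).toNat : ℤ) - d = s := by omega
      rw [hs', lcbcTerm_of_nonneg N d s hN1 hs.2, hNn]
  have hzero := keyA m (fun k => a ((k : ℤ) - d)) n₀ hkey
  have part1 : ∀ s : ℤ, -d ≤ s → a s = 0 := by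
    intro s hs
    by_cases hsS : s ∈ S
    · have hk := hm s hsS
      have hz := hzero (d + s).toNat hk
      rwa [show ((d + s).toNat : ℤ) - d = s by omega] at hz
    · exact ha0 s hsS
  constructor
  · intro s hs
    have := part1 s hs
    simp only [ha_def] at this
    omega
  · refine ⟨1, fun N hN => ?_⟩
    have hsum : ∑ s ∈ S, c s * lcbcTerm N (d + 1) s - ∑ s ∈ S, c' s * lcbcTerm N (d + 1) s
        = ∑ s ∈ S, a s * lcbcTerm N (d + 1) s := by
      rw [← Finset.sum_sub_distrib]
      apply Finset.sum_congr rfl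
      intro s _
      simp [ha_def, sub_mul]
    rw [hsum]
    have hstep : ∑ s ∈ S, a s * lcbcTerm N (d + 1) s
        = ∑ s ∈ S, (if s = -d - 1 then a (-d - 1) else 0) := by
      apply Finset.sum_congr rfl
      intro s hs
      rcases lt_trichotomy s (-d - 1) with h | h | h
      · rw [if_neg (by omega), lcbcTerm_of_neg N (d + 1) s hN (by omega), mul_zero]
      · subst h
        rw [if_pos rfl, lcbcTerm_of_nonneg N (d + 1) (-d - 1) hN (by omega)]
        rw [show (d + 1 + (-d - 1)).toNat = 0 by omega]
        simp
      · rw [if_neg (by omega), part1 s (by omega), zero_mul]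
    rw [hstep, Finset.sum_ite_eq' S (-d - 1) (fun _ => a (-d - 1))]
    split_ifs with h
    · simp [ha_def]
    · have := ha0 _ h
      simp only [ha_def] at this ⊢
      omega
end
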